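/- For every n ≥ 1, the polytope P_N = conv{±e_1, …, ±e_n, ±(e_1 + ⋯ + e_n)} ⊂ ℝ^n satisfies NVol_n(P_N) = (n+1)·binom(n, ⌊n/2⌋). -/

import Mathlib

open MeasureTheory Finset

/-- The polytope `P_N = conv{±e_1, …, ±e_n, ±(e_1 + ⋯ + e_n)} ⊂ ℝ^n` (with `N = n+1`). -/
noncomputable def PN (n : ℕ) : Set (Fin n → ℝ) :=
  convexHull ℝ
    ({v | ∃ i : Fin n, v = Pi.single i 1 ∨ v = -Pi.single i 1} ∪
      {(fun _ => 1 : Fin n → ℝ), (fun _ => -1 : Fin n → ℝ)})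

noncomputable section AuxPN

abbrev pidx (n : ℕ) := Option (Fin n)

/-- The `n+1` "points": `0` and the coordinates of `x`. -/
def ppt {n : ℕ} (x : Fin n → ℝ) : pidx n → ℝ := fun i => i.elim 0 x

def phiP {n : ℕ} (x : Fin n → ℝ) (t : ℝ) : ℝ := ∑ i : pidx n, |ppt x i - t|

def TP {n : ℕ} (m : pidx n) (B : Finset (pidx n)) : Set (Fin n → ℝ) :=
  {x | (∀ j ∈ B, ppt x j ≤ ppt x m) ∧ (∀ k, k ∉ B → k ≠ m → ppt x m ≤ ppt x k) ∧
    phiP x (ppt x m) ≤ 1}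

def SP (n : ℕ) : Finset (pidx n × Finset (pidx n)) :=
  Finset.univ.filter (fun q => q.1 ∉ q.2 ∧ q.2.card = n / 2)

def DeltaP (n : ℕ) : Set (Fin n → ℝ) := {y | (∀ j, 0 ≤ y j) ∧ ∑ j, y j ≤ 1}

def OrdS (n : ℕ) : Set (Fin n → ℝ) := {z | Monotone z ∧ ∀ i, z i ∈ Set.Icc (0:ℝ) 1}

def RS {n : ℕ} (σ : Equiv.Perm (Fin n)) : Set (Fin n → ℝ) :=
  {z | Monotone (z ∘ σ) ∧ ∀ i, z i ∈ Set.Icc (0:ℝ) 1}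

lemma vol_preimage_matrix {n : ℕ} (M : Matrix (Fin n) (Fin n) ℝ) (h : |M.det| = 1)
    (s : Set (Fin n → ℝ)) : volume (Matrix.toLin' M ⁻¹' s) = volume s := by
  have hdet : LinearMap.det (Matrix.toLin' M) = M.det := LinearMap.det_toLin' M
  have hne : LinearMap.det (Matrix.toLin' M) ≠ 0 := by
    rw [hdet]; intro h0; rw [h0] at h; simp at h
  rw [Measure.addHaar_preimage_linearMap volume hne, hdet, abs_inv, h]
  simp

lemma ppt_wit {n : ℕ} (i j : pidx n) (hij : i ≠ j) :
    ∃ x : Fin n → ℝ, ppt x i - ppt x j ≠ 0 := by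
  have key : ∀ (i j : pidx n), i ≠ j → (∃ a, i = some a) →
      ∃ x : Fin n → ℝ, ppt x i - ppt x j ≠ 0 := by
    rintro i j hij ⟨a, rfl⟩
    refine ⟨Pi.single a 1, ?_⟩
    have h1 : ppt (Pi.single a (1:ℝ)) (some a) = 1 := by simp [ppt]
    have h2 : ppt (Pi.single a (1:ℝ)) j = 0 := by
      cases j with
      | none => simp [ppt]
      | some b =>
        have hba : b ≠ a := by rintro rfl; exact hij rfl
        simp [ppt, Pi.single_eq_of_ne hba]
    rw [h1, h2]; norm_num
  cases i with
  | some a => exact key _ _ hij ⟨a, rfl⟩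
  | none =>
    cases j with
    | none => exact absurd rfl hij
    | some b =>
      obtain ⟨x, hx⟩ := key (some b) none (by simp) ⟨b, rfl⟩
      refine ⟨x, fun h => hx ?_⟩
      simp only [ppt] at h ⊢
      linarith

lemma null_pair {n : ℕ} (i j : pidx n) (hij : i ≠ j) :
    volume {x : Fin n → ℝ | ppt x i = ppt x j} = 0 := by
  classical
  set L : (Fin n → ℝ) →ₗ[ℝ] ℝ :=
    (i.elim 0 (fun a => LinearMap.proj a)) - (j.elim 0 (fun a => LinearMap.proj a)) with hL
  have hval : ∀ x, L x = ppt x i - ppt x j := by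
    intro x; cases i <;> cases j <;> simp [hL, ppt, LinearMap.proj]
  obtain ⟨x₀, hx₀⟩ := ppt_wit i j hij
  have hker : LinearMap.ker L ≠ ⊤ := by
    intro h
    have : L x₀ = 0 := by
      have : x₀ ∈ LinearMap.ker L := by rw [h]; trivial
      exact this
    rw [hval] at this; exact hx₀ this
  have hset : {x : Fin n → ℝ | ppt x i = ppt x j} = (LinearMap.ker L : Set _) := by
    ext x; simp [LinearMap.mem_ker, hval, sub_eq_zero]
  rw [hset]; exact Measure.addHaar_submodule volume _ hker

lemma measurable_DeltaP (n : ℕ) : MeasurableSet (DeltaP n) := by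
  have h1 : MeasurableSet {y : Fin n → ℝ | ∀ j, 0 ≤ y j} := by
    rw [Set.setOf_forall]
    exact MeasurableSet.iInter fun j =>
      measurableSet_le measurable_const (measurable_pi_apply j)
  have h2 : MeasurableSet {y : Fin n → ℝ | ∑ j, y j ≤ 1} :=
    measurableSet_le (Finset.measurable_sum _ fun j _ => measurable_pi_apply j) measurable_const
  exact (h1.inter h2 : _)

lemma card_SP (n : ℕ) : (SP n).card = (n + 1) * n.choose (n / 2) := by
  classical
  have hS : SP n = Finset.univ.biUnion
      (fun m : pidx n => ((Finset.univ.erase m).powersetCard (n / 2)).image fun B => (m, B)) := by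
    ext q
    simp only [SP, mem_filter, mem_univ, true_and, mem_biUnion, mem_image,
      Finset.mem_powersetCard]
    constructor
    · rintro ⟨h1, h2⟩
      exact ⟨q.1, q.2, ⟨Finset.subset_erase.mpr ⟨Finset.subset_univ _, h1⟩, h2⟩, rfl⟩
    · rintro ⟨m, B, ⟨hsub, hcard⟩, rfl⟩
      exact ⟨(Finset.subset_erase.mp hsub).2, hcard⟩
  rw [hS, Finset.card_biUnion]
  · have : ∀ m : pidx n,
        (((Finset.univ.erase m).powersetCard (n / 2)).image fun B => (m, B)).card
          = n.choose (n / 2) := by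
      intro m
      rw [Finset.card_image_of_injective _ (fun B B' h => (Prod.mk.injEq _ _ _ _).mp h |>.2),
        Finset.card_powersetCard, Finset.card_erase_of_mem (mem_univ m)]
      simp [Fintype.card_option]
    simp [this, Finset.sum_const, Finset.card_univ, Fintype.card_option]
  · intro a _ b _ hab
    simp only [Finset.disjoint_left, mem_image]
    rintro q ⟨B, -, rfl⟩ ⟨B', -, hq⟩
    exact hab ((Prod.mk.injEq _ _ _ _).mp hq).1.symm

lemma phiP_eq {n : ℕ} (x : Fin n → ℝ) (t : ℝ) : phiP x t = |t| + ∑ j, |x j - t| := by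
  rw [phiP, Fintype.sum_option]
  simp [ppt, abs_sub_comm]

-- the `m = none` case
lemma median {n : ℕ} (x : Fin n → ℝ) (m : pidx n) (B : Finset (pidx n)) (hmB : m ∉ B)
    (hcard : B.card = n / 2) (h1 : ∀ j ∈ B, ppt x j ≤ ppt x m)
    (h2 : ∀ k, k ∉ B → k ≠ m → ppt x m ≤ ppt x k) (t : ℝ) :
    phiP x (ppt x m) ≤ phiP x t := by
  classical
  set c := ppt x m with hc
  set A : Finset (pidx n) := Finset.univ \ insert m B with hA
  have hins : insert m B ⊆ Finset.univ := subset_univ _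
  have hAmem : ∀ j ∈ A, j ∉ B ∧ j ≠ m := by
    intro j hj
    rw [hA, Finset.mem_sdiff, Finset.mem_insert] at hj
    push_neg at hj
    exact ⟨hj.2.2, hj.2.1⟩
  have key : ∀ u : ℝ, phiP x u =
      |c - u| + ∑ j ∈ B, |ppt x j - u| + ∑ j ∈ A, |ppt x j - u| := by
    intro u
    rw [phiP, ← Finset.sum_sdiff hins, Finset.sum_insert hmB, ← hA, ← hc]
    ring
  set Sb := ∑ j ∈ B, ppt x j with hSb
  set Sa := ∑ j ∈ A, ppt x j with hSa
  have hB_lhs : ∑ j ∈ B, |ppt x j - c| = B.card * c - Sb := by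
    calc ∑ j ∈ B, |ppt x j - c| = ∑ j ∈ B, (c - ppt x j) := Finset.sum_congr rfl fun j hj => by
          rw [abs_sub_comm, abs_of_nonneg (by linarith [h1 j hj])]
      _ = B.card * c - Sb := by rw [Finset.sum_sub_distrib, Finset.sum_const, nsmul_eq_mul, hSb]
  have hA_lhs : ∑ j ∈ A, |ppt x j - c| = Sa - A.card * c := by
    calc ∑ j ∈ A, |ppt x j - c| = ∑ j ∈ A, (ppt x j - c) := Finset.sum_congr rfl fun j hj => by
          rw [abs_of_nonneg (by linarith [h2 j (hAmem j hj).1 (hAmem j hj).2])]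
      _ = Sa - A.card * c := by rw [Finset.sum_sub_distrib, Finset.sum_const, nsmul_eq_mul, hSa]
  have hB_rhs : (B.card : ℝ) * t - Sb ≤ ∑ j ∈ B, |ppt x j - t| := by
    calc (B.card : ℝ) * t - Sb = ∑ j ∈ B, (t - ppt x j) := by
          rw [Finset.sum_sub_distrib, Finset.sum_const, nsmul_eq_mul, hSb]
      _ ≤ ∑ j ∈ B, |ppt x j - t| := Finset.sum_le_sum fun j hj => by
          rw [abs_sub_comm]; exact le_abs_self _
  have hA_rhs : Sa - (A.card : ℝ) * t ≤ ∑ j ∈ A, |ppt x j - t| := by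
    calc Sa - (A.card : ℝ) * t = ∑ j ∈ A, (ppt x j - t) := by
          rw [Finset.sum_sub_distrib, Finset.sum_const, nsmul_eq_mul, hSa]
      _ ≤ ∑ j ∈ A, |ppt x j - t| := Finset.sum_le_sum fun j hj => le_abs_self _
  have hAcard : B.card ≤ A.card ∧ A.card ≤ B.card + 1 := by
    have : A.card = (Finset.univ : Finset (pidx n)).card - (insert m B).card := by
      rw [hA, Finset.card_sdiff_of_subset hins]
    rw [Finset.card_insert_of_notMem hmB] at this
    have hu : (Finset.univ : Finset (pidx n)).card = n + 1 := by
      simp [Fintype.card_option]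
    have hB2 : B.card ≤ n := by
      have := Finset.card_le_card (Finset.subset_erase.mpr ⟨Finset.subset_univ B, hmB⟩)
      rw [Finset.card_erase_of_mem (mem_univ m), hu] at this
      omega
    omega
  have hc1 : (B.card : ℝ) ≤ A.card := by exact_mod_cast hAcard.1
  have hc2 : (A.card : ℝ) ≤ B.card + 1 := by exact_mod_cast hAcard.2
  rw [key c, key t, hB_lhs, hA_lhs, sub_self, abs_zero]
  rcases abs_cases (c - t) with ⟨habs, hsign⟩ | ⟨habs, hsign⟩ <;> rw [habs] <;>
    nlinarith [hB_rhs, hA_rhs, mul_nonneg (sub_nonneg.mpr hc1) (abs_nonneg (c - t))]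

lemma cover (n : ℕ) : {x : Fin n → ℝ | ∃ t, phiP x t ≤ 1} = ⋃ q ∈ SP n, TP q.1 q.2 := by
  classical
  ext x
  simp only [Set.mem_setOf_eq, Set.mem_iUnion]
  constructor
  · rintro ⟨t, ht⟩
    set e : Fin (n + 1) ≃ pidx n := finSuccEquiv n with he
    set f : Fin (n + 1) → ℝ := fun a => ppt x (e a) with hf
    set σ := Tuple.sort f with hσ
    have hmono : Monotone (f ∘ σ) := Tuple.monotone_sort f
    have hinj : Function.Injective (fun a => e (σ a)) :=
      fun a b hab => σ.injective (e.injective hab)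
    set k₀ : Fin (n + 1) := ⟨n / 2, by omega⟩ with hk₀
    set m : pidx n := e (σ k₀) with hm
    set B : Finset (pidx n) := (Finset.Iio k₀).image (fun a => e (σ a)) with hB
    have hmB : m ∉ B := by
      rw [hB]
      simp only [Finset.mem_image, Finset.mem_Iio]
      rintro ⟨a, ha, hae⟩
      exact absurd (hinj hae) (ne_of_lt ha)
    have hcard : B.card = n / 2 := by
      rw [hB, Finset.card_image_of_injective _ hinj, Fin.card_Iio]
    have h1 : ∀ j ∈ B, ppt x j ≤ ppt x m := by
      intro j hj
      rw [hB] at hj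
      simp only [Finset.mem_image, Finset.mem_Iio] at hj
      obtain ⟨a, ha, rfl⟩ := hj
      exact hmono (le_of_lt ha)
    have h2 : ∀ k, k ∉ B → k ≠ m → ppt x m ≤ ppt x k := by
      intro k hk hkm
      set a := σ.symm (e.symm k) with ha
      have hka : k = e (σ a) := by rw [ha]; simp
      have ha1 : a ≠ k₀ := by intro h; rw [h] at hka; exact hkm (by rw [hka])
      have ha2 : ¬(a < k₀) := by
        intro hlt
        exact hk (by rw [hB]; exact Finset.mem_image.mpr ⟨a, Finset.mem_Iio.mpr hlt, hka.symm⟩)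
      have : k₀ < a := lt_of_le_of_ne (not_lt.mp ha2) (Ne.symm ha1)
      rw [hka]
      exact hmono (le_of_lt this)
    refine ⟨(m, B), ?_, h1, h2, le_trans (median x m B hmB hcard h1 h2 t) ht⟩
    simp [SP, hmB, hcard]
  · rintro ⟨q, hq, h1, h2, h3⟩
    exact ⟨ppt x q.1, h3⟩

lemma TP_disj {n : ℕ} (q q' : pidx n × Finset (pidx n)) (hq : q ∈ SP n) (hq' : q' ∈ SP n)
    (hne : q ≠ q') : ∃ i j : pidx n, i ≠ j ∧
      TP q.1 q.2 ∩ TP q'.1 q'.2 ⊆ {x | ppt x i = ppt x j} := by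
  classical
  obtain ⟨m, B⟩ := q
  obtain ⟨m', B'⟩ := q'
  simp only [SP, mem_filter, mem_univ, true_and] at hq hq'
  obtain ⟨hmB, hBc⟩ := hq
  obtain ⟨hm'nB', hBc'⟩ := hq'
  by_cases hmm : m = m'
  · subst hmm
    have hBne : B ≠ B' := by
      intro h; exact hne (by rw [h])
    have hnsub : ¬ B ⊆ B' := fun hsub =>
      hBne (Finset.eq_of_subset_of_card_le hsub (by rw [hBc, hBc']))
    obtain ⟨j, hjB, hjB'⟩ := Finset.not_subset.mp hnsub
    have hjm : j ≠ m := fun h => hmB (h ▸ hjB)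
    refine ⟨j, m, hjm, ?_⟩
    rintro x ⟨hx, hx'⟩
    exact le_antisymm (hx.1 j hjB) (hx'.2.1 j hjB' hjm)
  · by_cases hm'B : m' ∈ B
    · by_cases hmB' : m ∈ B'
      · exact ⟨m, m', hmm, fun x ⟨hx, hx'⟩ =>
          le_antisymm (hx'.1 m hmB') (hx.1 m' hm'B)⟩
      · -- m' ∈ B, m ∉ B' : find j ∈ B' \ B
        have hnsub : ¬ B' ⊆ B := by
          intro hsub
          have : B' = B := Finset.eq_of_subset_of_card_le hsub (by rw [hBc, hBc'])
          rw [← this] at hm'B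
          exact hm'nB' hm'B
        obtain ⟨j, hjB', hjB⟩ := Finset.not_subset.mp hnsub
        have hjm : j ≠ m := fun h => hmB' (h ▸ hjB')
        refine ⟨m, m', hmm, ?_⟩
        rintro x ⟨hx, hx'⟩
        have c1 : ppt x m ≤ ppt x j := hx.2.1 j hjB hjm
        have c2 : ppt x j ≤ ppt x m' := hx'.1 j hjB'
        have c3 : ppt x m' ≤ ppt x m := hx.1 m' hm'B
        exact le_antisymm (le_trans c1 c2) c3
    · by_cases hmB' : m ∈ B'
      · have hnsub : ¬ B ⊆ B' := by
          intro hsub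
          have : B = B' := Finset.eq_of_subset_of_card_le hsub (by rw [hBc, hBc'])
          rw [this] at hmB
          exact hmB hmB'
        obtain ⟨j, hjB, hjB'⟩ := Finset.not_subset.mp hnsub
        have hjm' : j ≠ m' := fun h => hm'B (h ▸ hjB)
        refine ⟨m, m', hmm, ?_⟩
        rintro x ⟨hx, hx'⟩
        have c1 : ppt x m ≤ ppt x m' := hx'.1 m hmB'
        have c2 : ppt x m' ≤ ppt x j := hx'.2.1 j hjB' hjm'
        have c3 : ppt x j ≤ ppt x m := hx.1 j hjB
        exact le_antisymm c1 (le_trans c2 c3)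
      · refine ⟨m, m', hmm, ?_⟩
        rintro x ⟨hx, hx'⟩
        exact le_antisymm (hx.2.1 m' hm'B (Ne.symm hmm)) (hx'.2.1 m hmB' hmm)

lemma TP_none {n : ℕ} (B : Finset (pidx n)) (hmB : (none : pidx n) ∉ B) :
    ∃ M : Matrix (Fin n) (Fin n) ℝ, |M.det| = 1 ∧ TP none B = Matrix.toLin' M ⁻¹' DeltaP n := by
  classical
  set sgn : Fin n → ℝ := fun j => if some j ∈ B then -1 else 1 with hsgn
  have hsgn1 : ∀ j, |sgn j| = 1 := by
    intro j; rw [hsgn]; dsimp only; split <;> simp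
  refine ⟨Matrix.diagonal sgn, ?_, ?_⟩
  · rw [Matrix.det_diagonal, Finset.abs_prod]
    simp [hsgn1]
  · have happ : ∀ (x : Fin n → ℝ) j, Matrix.toLin' (Matrix.diagonal sgn) x j = sgn j * x j := by
      intro x j
      rw [Matrix.toLin'_apply, Matrix.mulVec_diagonal]
    ext x
    simp only [TP, Set.mem_setOf_eq, Set.mem_preimage, DeltaP, happ]
    have hord : (∀ j, 0 ≤ sgn j * x j) ↔
        ((∀ j ∈ B, ppt x j ≤ ppt x none) ∧
          (∀ k, k ∉ B → k ≠ none → ppt x none ≤ ppt x k)) := by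
      constructor
      · intro h
        constructor
        · intro j hj
          cases j with
          | none => exact absurd hj hmB
          | some a =>
            have := h a
            rw [hsgn] at this
            simp only [if_pos hj] at this
            simp only [ppt, Option.elim]
            linarith
        · intro k hk hkn
          cases k with
          | none => exact absurd rfl hkn
          | some a =>
            have := h a
            rw [hsgn] at this
            simp only [if_neg hk] at this
            simp only [ppt, Option.elim]
            linarith
      · rintro ⟨h1, h2⟩ j
        rw [hsgn]
        by_cases hj : some j ∈ B
        · have := h1 (some j) hj
          simp only [ppt, Option.elim] at this
          simp only [if_pos hj]
          linarith
        · have := h2 (some j) hj (by simp)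
          simp only [ppt, Option.elim] at this
          simp only [if_neg hj]
          linarith
    have hsum : (∀ j, 0 ≤ sgn j * x j) → ∑ j, sgn j * x j = phiP x (ppt x none) := by
      intro h
      have : ∀ j, sgn j * x j = |x j| := by
        intro j
        rcases abs_cases (sgn j) with ⟨hs, _⟩ | ⟨hs, _⟩ <;> rw [hsgn1 j] at hs
        · rw [← hs, one_mul, abs_of_nonneg (by have := h j; rw [← hs] at this; linarith)]
        · have hs' : sgn j = -1 := by linarith
          rw [hs', neg_one_mul, abs_of_nonpos (by have := h j; rw [hs'] at this; linarith)]
      rw [Finset.sum_congr rfl fun j _ => this j]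
      have : ppt x (none : pidx n) = 0 := rfl
      rw [this, phiP_eq]
      simp
    constructor
    · rintro ⟨h1, h2, h3⟩
      have h0 : ∀ j, 0 ≤ sgn j * x j := hord.mpr ⟨h1, h2⟩
      exact ⟨h0, by rw [hsum h0]; exact h3⟩
    · rintro ⟨h0, hs⟩
      obtain ⟨h1, h2⟩ := hord.mp h0
      exact ⟨h1, h2, by rw [← hsum h0]; exact hs⟩

lemma TP_some {n : ℕ} (m₀ : Fin n) (B : Finset (pidx n)) (hmB : (some m₀ : pidx n) ∉ B) :
    ∃ M : Matrix (Fin n) (Fin n) ℝ, |M.det| = 1 ∧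
      TP (some m₀) B = Matrix.toLin' M ⁻¹' DeltaP n := by
  classical
  set sgn : Fin n → ℝ := fun j =>
    if j = m₀ then (if (none : pidx n) ∈ B then 1 else -1)
    else if some j ∈ B then -1 else 1 with hsgn
  have hsgn1 : ∀ j, |sgn j| = 1 := by
    intro j; rw [hsgn]; dsimp only; split
    · split <;> simp
    · split <;> simp
  have hsgnm : sgn m₀ = if (none : pidx n) ∈ B then 1 else -1 := by rw [hsgn]; simp
  have hsgnB : ∀ j, j ≠ m₀ → some j ∈ B → sgn j = -1 := by
    intro j hj hjB; rw [hsgn]; simp [hj, hjB]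
  have hsgnA : ∀ j, j ≠ m₀ → some j ∉ B → sgn j = 1 := by
    intro j hj hjB; rw [hsgn]; simp [hj, hjB]
  set M : Matrix (Fin n) (Fin n) ℝ := fun j k =>
    if j = m₀ then (if k = j then sgn j else 0)
    else (if k = j then sgn j else if k = m₀ then -(sgn j) else 0) with hM
  have happ : ∀ (x : Fin n → ℝ) j, Matrix.toLin' M x j =
      if j = m₀ then sgn m₀ * x m₀ else sgn j * (x j - x m₀) := by
    intro x j
    rw [Matrix.toLin'_apply]
    show ∑ k, M j k * x k = _
    have hMjk : ∀ k, M j k = if j = m₀ then (if k = j then sgn j else 0)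
        else (if k = j then sgn j else if k = m₀ then -(sgn j) else 0) := fun k => rfl
    by_cases hj : j = m₀
    · rw [if_pos hj]
      have hrow0 : ∀ k, M j k * x k = if k = j then sgn j * x k else 0 := by
        intro k; rw [hMjk k, if_pos hj]; split <;> simp
      rw [Finset.sum_congr rfl (fun k _ => hrow0 k),
        Finset.sum_ite_eq' Finset.univ j (fun k => sgn j * x k)]
      simp [hj]
    · rw [if_neg hj]
      have hrow : ∀ k, M j k * x k =
          (if k = j then sgn j * x k else 0) + (if k = m₀ then -(sgn j) * x k else 0) := by
        intro k
        rw [hMjk k, if_neg hj]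
        by_cases h1 : k = j
        · rw [if_pos h1, if_pos h1, if_neg (h1 ▸ hj), add_zero]
        · rw [if_neg h1, if_neg h1]
          by_cases h2 : k = m₀
          · rw [if_pos h2, if_pos h2, zero_add]
          · rw [if_neg h2, if_neg h2, zero_mul, add_zero]
      rw [Finset.sum_congr rfl (fun k _ => hrow k), Finset.sum_add_distrib,
        Finset.sum_ite_eq' Finset.univ j (fun k => sgn j * x k),
        Finset.sum_ite_eq' Finset.univ m₀ (fun k => -(sgn j) * x k)]
      simp only [Finset.mem_univ, if_pos]
      ring
  have hnpos : 0 < n := lt_of_le_of_lt (Nat.zero_le _) m₀.isLt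
  set ln : Fin n := ⟨n - 1, by omega⟩ with hln
  set τ : Equiv.Perm (Fin n) := Equiv.swap m₀ ln with hτ
  have hτm : ∀ j : Fin n, τ j = m₀ ↔ j = ln := by
    intro j
    constructor
    · intro h
      have : τ ln = m₀ := Equiv.swap_apply_right m₀ ln
      exact τ.injective (h.trans this.symm)
    · rintro rfl; exact Equiv.swap_apply_right m₀ ln
  have hdet : M.det = ∏ i, sgn (τ i) := by
    rw [← Matrix.det_submatrix_equiv_self τ M]
    rw [Matrix.det_of_upperTriangular]
    · apply Finset.prod_congr rfl
      intro i _
      show M (τ i) (τ i) = sgn (τ i)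
      rw [hM]; dsimp only
      by_cases h : τ i = m₀ <;> simp [h]
    · intro i j hij
      show M (τ i) (τ j) = 0
      have hij' : (j : Fin n) < i := hij
      have hji : τ j ≠ τ i := fun h => ne_of_lt hij' (τ.injective h)
      have hjm : τ j ≠ m₀ := by
        rw [Ne, hτm]
        intro h
        have : (j : ℕ) < n - 1 := by
          have := hij'
          have hi : (i : ℕ) ≤ n - 1 := by omega
          exact lt_of_lt_of_le this hi
        rw [h] at this
        simp [hln] at this
      rw [hM]; dsimp only
      by_cases h : τ i = m₀
      · rw [if_pos h, if_neg hji]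
      · rw [if_neg h, if_neg hji, if_neg hjm]
  refine ⟨M, ?_, ?_⟩
  · rw [hdet, Finset.abs_prod]
    simp [hsgn1]
  · ext x
    simp only [TP, Set.mem_setOf_eq, Set.mem_preimage, DeltaP, happ]
    have hppt : ppt x (some m₀) = x m₀ := rfl
    set c := x m₀ with hc
    have hord : (∀ j, 0 ≤ if j = m₀ then sgn m₀ * x m₀ else sgn j * (x j - x m₀)) ↔
        ((∀ j ∈ B, ppt x j ≤ x m₀) ∧
          (∀ k, k ∉ B → k ≠ some m₀ → x m₀ ≤ ppt x k)) := by
      constructor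
      · intro h
        constructor
        · intro j hj
          cases j with
          | none =>
            have := h m₀
            rw [if_pos rfl, hsgnm, if_pos hj, one_mul] at this
            simpa [ppt] using this
          | some a =>
            have ham : a ≠ m₀ := by rintro rfl; exact hmB hj
            have := h a
            rw [if_neg ham, hsgnB a ham hj, neg_one_mul] at this
            simp only [ppt, Option.elim]
            linarith
        · intro k hk hkm
          cases k with
          | none =>
            have := h m₀
            rw [if_pos rfl, hsgnm, if_neg hk, neg_one_mul] at this
            simp only [ppt, Option.elim]
            linarith
          | some a =>
            have ham : a ≠ m₀ := fun h' => hkm (by rw [h'])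
            have := h a
            rw [if_neg ham, hsgnA a ham hk, one_mul] at this
            simp only [ppt, Option.elim]
            linarith
      · rintro ⟨h1, h2⟩ j
        by_cases hj : j = m₀
        · subst hj
          rw [if_pos rfl, hsgnm]
          by_cases hnB : (none : pidx n) ∈ B
          · have := h1 none hnB
            simp only [ppt, Option.elim] at this
            rw [if_pos hnB, one_mul]
            linarith
          · have := h2 none hnB (by simp)
            simp only [ppt, Option.elim] at this
            rw [if_neg hnB, neg_one_mul]
            linarith
        · rw [if_neg hj]
          by_cases hjB : some j ∈ B
          · have := h1 (some j) hjB
            simp only [ppt, Option.elim] at this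
            rw [hsgnB j hj hjB, neg_one_mul]
            linarith
          · have := h2 (some j) hjB (by simp [hj])
            simp only [ppt, Option.elim] at this
            rw [hsgnA j hj hjB, one_mul]
            linarith
    have hsum : ((∀ j ∈ B, ppt x j ≤ x m₀) ∧
          (∀ k, k ∉ B → k ≠ some m₀ → x m₀ ≤ ppt x k)) →
        (∑ j, if j = m₀ then sgn m₀ * x m₀ else sgn j * (x j - x m₀)) = phiP x (x m₀) := by
      rintro ⟨h1, h2⟩
      have hpt : ∀ j, (if j = m₀ then sgn m₀ * x m₀ else sgn j * (x j - x m₀)) =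
          |x j - x m₀| + (if j = m₀ then |x m₀| else 0) := by
        intro j
        by_cases hj : j = m₀
        · subst hj
          rw [if_pos rfl, if_pos rfl, sub_self, abs_zero, zero_add, hsgnm]
          by_cases hnB : (none : pidx n) ∈ B
          · have := h1 none hnB
            simp only [ppt, Option.elim] at this
            rw [if_pos hnB, one_mul, abs_of_nonneg this]
          · have := h2 none hnB (by simp)
            simp only [ppt, Option.elim] at this
            rw [if_neg hnB, neg_one_mul, abs_of_nonpos this]
        · rw [if_neg hj, if_neg hj, add_zero]
          by_cases hjB : some j ∈ B
          · have := h1 (some j) hjB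
            simp only [ppt, Option.elim] at this
            rw [hsgnB j hj hjB, neg_one_mul, abs_of_nonpos (by linarith)]
          · have := h2 (some j) hjB (by simp [hj])
            simp only [ppt, Option.elim] at this
            rw [hsgnA j hj hjB, one_mul, abs_of_nonneg (by linarith)]
      rw [Finset.sum_congr rfl (fun j _ => hpt j), Finset.sum_add_distrib,
        Finset.sum_ite_eq' Finset.univ m₀ (fun _ => |x m₀|), phiP_eq]
      simp only [Finset.mem_univ, if_pos]
      ring
    rw [hppt]
    constructor
    · rintro ⟨h1, h2, h3⟩
      refine ⟨hord.mpr ⟨h1, h2⟩, ?_⟩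
      rw [hsum ⟨h1, h2⟩]
      exact h3
    · rintro ⟨h0, hs⟩
      obtain ⟨h1, h2⟩ := hord.mp h0
      exact ⟨h1, h2, by rw [← hsum ⟨h1, h2⟩]; exact hs⟩

lemma PN_eq (n : ℕ) (hn : 1 ≤ n) : PN n = {x | ∃ t, phiP x t ≤ 1} := by
  classical
  apply Set.Subset.antisymm
  · apply convexHull_min
    · rintro v hv
      rcases hv with ⟨i, hv | hv⟩ | hv
      · refine ⟨0, ?_⟩
        rw [hv, phiP_eq]
        have h1 : ∀ j, |Pi.single i (1:ℝ) j - 0| = (if j = i then (1:ℝ) else 0) := by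
          intro j; rw [sub_zero, Pi.single_apply]; split <;> simp
        rw [Finset.sum_congr rfl fun j _ => h1 j, Finset.sum_ite_eq' Finset.univ i fun _ => (1:ℝ)]
        simp
      · refine ⟨0, ?_⟩
        rw [hv, phiP_eq]
        have h1 : ∀ j, |(-Pi.single i (1:ℝ)) j - 0| = (if j = i then (1:ℝ) else 0) := by
          intro j; rw [sub_zero, Pi.neg_apply, abs_neg, Pi.single_apply]; split <;> simp
        rw [Finset.sum_congr rfl fun j _ => h1 j, Finset.sum_ite_eq' Finset.univ i fun _ => (1:ℝ)]
        simp
      · simp only [Set.mem_insert_iff, Set.mem_singleton_iff] at hv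
        rcases hv with hv | hv
        · exact ⟨1, by rw [hv, phiP_eq]; simp⟩
        · exact ⟨-1, by rw [hv, phiP_eq]; simp⟩
    · intro x hx y hy a b ha hb hab
      obtain ⟨t, ht⟩ := hx
      obtain ⟨u, hu⟩ := hy
      refine ⟨a * t + b * u, ?_⟩
      rw [phiP_eq] at ht hu ⊢
      have habs : ∀ p q : ℝ, |a * p + b * q| ≤ a * |p| + b * |q| := by
        intro p q
        refine (abs_add_le _ _).trans ?_
        rw [abs_mul, abs_mul, abs_of_nonneg ha, abs_of_nonneg hb]
      have h2 : ∀ j, |(a • x + b • y) j - (a * t + b * u)| ≤ a * |x j - t| + b * |y j - u| := by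
        intro j
        have he : (a • x + b • y) j - (a * t + b * u) = a * (x j - t) + b * (y j - u) := by
          simp only [Pi.add_apply, Pi.smul_apply, smul_eq_mul]; ring
        rw [he]; exact habs _ _
      have h3 : ∑ j, |(a • x + b • y) j - (a * t + b * u)| ≤
          a * ∑ j, |x j - t| + b * ∑ j, |y j - u| := by
        rw [Finset.mul_sum, Finset.mul_sum, ← Finset.sum_add_distrib]
        exact Finset.sum_le_sum fun j _ => h2 j
      have h4 := habs t u
      nlinarith [abs_nonneg t, abs_nonneg u, Finset.sum_nonneg (fun j (_ : j ∈ Finset.univ) => abs_nonneg (x j - t)), Finset.sum_nonneg (fun j (_ : j ∈ Finset.univ) => abs_nonneg (y j - u))]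
  · rintro x ⟨t, ht⟩
    rw [phiP_eq] at ht
    set i0 : Fin n := ⟨0, hn⟩ with hi0
    set s : ℝ := (1 - |t| - ∑ j, |x j - t|) / 2 with hs
    have hs0 : 0 ≤ s := by rw [hs]; linarith
    set w : (Fin n ⊕ Fin 3) → ℝ :=
      Sum.elim (fun i => |x i - t|) (fun k => if k = 0 then s else if k = 1 then s else |t|) with hw
    set z : (Fin n ⊕ Fin 3) → (Fin n → ℝ) :=
      Sum.elim (fun i => if 0 ≤ x i - t then Pi.single i 1 else -Pi.single i 1)
        (fun k => if k = 0 then Pi.single i0 1 else if k = 1 then -Pi.single i0 1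
          else (if 0 ≤ t then (fun _ => (1:ℝ)) else (fun _ => (-1:ℝ)))) with hz
    have hw0 : ∀ i ∈ Finset.univ, 0 ≤ w i := by
      rintro (i | k) -
      · exact abs_nonneg _
      · rw [hw]; dsimp only [Sum.elim_inr]
        split
        · exact hs0
        · split
          · exact hs0
          · exact abs_nonneg _
    have ew0 : w (Sum.inr 0) = s := by rw [hw]; dsimp only [Sum.elim_inr]; rw [if_pos rfl]
    have ew1 : w (Sum.inr 1) = s := by
      rw [hw]; dsimp only [Sum.elim_inr]; rw [if_neg (by decide), if_pos rfl]
    have ew2 : w (Sum.inr 2) = |t| := by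
      rw [hw]; dsimp only [Sum.elim_inr]; rw [if_neg (by decide), if_neg (by decide)]
    have hw1 : ∑ i, w i = 1 := by
      rw [Fintype.sum_sum_type, Fin.sum_univ_three, ew0, ew1, ew2]
      have hwl : ∀ i : Fin n, w (Sum.inl i) = |x i - t| := fun i => by
        rw [hw]; dsimp only [Sum.elim_inl]
      rw [Finset.sum_congr rfl fun i _ => hwl i, hs]
      ring
    have hzV : ∀ i ∈ Finset.univ, z i ∈
        ({v | ∃ i : Fin n, v = Pi.single i 1 ∨ v = -Pi.single i 1} ∪
          {(fun _ => 1 : Fin n → ℝ), (fun _ => -1 : Fin n → ℝ)}) := by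
      rintro (i | k) -
      · rw [hz]; dsimp only [Sum.elim_inl]
        split
        · exact Or.inl ⟨i, Or.inl rfl⟩
        · exact Or.inl ⟨i, Or.inr rfl⟩
      · rw [hz]; dsimp only [Sum.elim_inr]
        split
        · exact Or.inl ⟨i0, Or.inl rfl⟩
        · split
          · exact Or.inl ⟨i0, Or.inr rfl⟩
          · split
            · exact Or.inr (Or.inl rfl)
            · exact Or.inr (Or.inr rfl)
    have hcm : Finset.univ.centerMass w z = x := by
      rw [Finset.centerMass, hw1, inv_one, one_smul]
      rw [Fintype.sum_sum_type]
      have hterm : ∀ i : Fin n, w (Sum.inl i) • z (Sum.inl i) =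
          (x i - t) • (Pi.single i 1 : Fin n → ℝ) := by
        intro i
        rw [hw, hz]; dsimp only [Sum.elim_inl]
        by_cases h : 0 ≤ x i - t
        · rw [if_pos h, abs_of_nonneg h]
        · rw [if_neg h, abs_of_nonpos (le_of_not_ge h), smul_neg, neg_smul, neg_neg]
      have ez0 : w (Sum.inr 0) • z (Sum.inr 0) = s • (Pi.single i0 1 : Fin n → ℝ) := by
        rw [ew0, hz]; dsimp only [Sum.elim_inr]; rw [if_pos rfl]
      have ez1 : w (Sum.inr 1) • z (Sum.inr 1) = -(s • (Pi.single i0 1 : Fin n → ℝ)) := by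
        rw [ew1, hz]; dsimp only [Sum.elim_inr]
        rw [if_neg (by decide), if_pos rfl, smul_neg]
      have ez2 : w (Sum.inr 2) • z (Sum.inr 2) = t • (fun _ => (1:ℝ)) := by
        rw [ew2, hz]; dsimp only [Sum.elim_inr]
        rw [if_neg (by decide), if_neg (by decide)]
        by_cases h : 0 ≤ t
        · rw [if_pos h, abs_of_nonneg h]
        · rw [if_neg h, abs_of_nonpos (le_of_not_ge h)]
          funext j
          simp only [Pi.smul_apply, smul_eq_mul]
          ring
      have hterm2 : ∑ k : Fin 3, w (Sum.inr k) • z (Sum.inr k) = t • (fun _ => (1:ℝ)) := by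
        rw [Fin.sum_univ_three, ez0, ez1, ez2]
        abel
      rw [Finset.sum_congr rfl fun i _ => hterm i, hterm2]
      funext j
      simp only [Pi.add_apply, Finset.sum_apply, Pi.smul_apply, smul_eq_mul]
      have : ∀ i, (x i - t) * (Pi.single i 1 : Fin n → ℝ) j = (if j = i then x i - t else 0) := by
        intro i; rw [Pi.single_apply]; split <;> simp
      rw [Finset.sum_congr rfl fun i _ => this i, Finset.sum_ite_eq Finset.univ j fun i => x i - t]
      simp
    rw [PN, ← hcm]
    exact Finset.centerMass_mem_convexHull _ hw0 (by rw [hw1]; norm_num) hzV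

lemma measurable_OrdS (n : ℕ) : MeasurableSet (OrdS n) := by
  have h1 : MeasurableSet {z : Fin n → ℝ | Monotone z} := by
    have : {z : Fin n → ℝ | Monotone z} =
        ⋂ (i : Fin n) (j : Fin n) (_ : i ≤ j), {z : Fin n → ℝ | z i ≤ z j} := by
      ext z
      simp only [Set.mem_setOf_eq, Set.mem_iInter]
      exact ⟨fun h i j hij => h hij, fun h i j hij => h i j hij⟩
    rw [this]
    exact MeasurableSet.iInter fun i => MeasurableSet.iInter fun j =>
      MeasurableSet.iInter fun _ => measurableSet_le (measurable_pi_apply i) (measurable_pi_apply j)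
  have h2 : MeasurableSet {z : Fin n → ℝ | ∀ i, z i ∈ Set.Icc (0:ℝ) 1} := by
    rw [Set.setOf_forall]
    exact MeasurableSet.iInter fun i => (measurable_pi_apply i) measurableSet_Icc
  exact h1.inter h2

-- permuting coordinates
lemma vol_perm {n : ℕ} (σ : Equiv.Perm (Fin n)) :
    volume {z : Fin n → ℝ | Monotone (z ∘ σ) ∧ ∀ i, z i ∈ Set.Icc (0:ℝ) 1} = volume (OrdS n) := by
  classical
  have happ : ∀ z : Fin n → ℝ, Matrix.toLin' (σ.permMatrix ℝ) z = z ∘ σ := by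
    intro z
    funext j
    rw [Matrix.toLin'_apply]
    show ∑ k, (σ.permMatrix ℝ) j k * z k = z (σ j)
    have hentry : ∀ k, (σ.permMatrix ℝ) j k = if σ j = k then 1 else 0 := by
      intro k
      simp [Equiv.Perm.permMatrix, PEquiv.toMatrix_apply, Equiv.toPEquiv_apply, Option.mem_def]
    have : ∀ k, (σ.permMatrix ℝ) j k * z k = if σ j = k then z k else 0 := by
      intro k
      rw [hentry k]
      split <;> simp
    rw [Finset.sum_congr rfl fun k _ => this k, Finset.sum_ite_eq Finset.univ (σ j) z]
    simp
  have hdet : |(σ.permMatrix ℝ).det| = 1 := by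
    rw [Matrix.det_permutation]
    rcases Int.units_eq_one_or (Equiv.Perm.sign σ) with h | h <;> rw [h] <;> simp
  have hset : {z : Fin n → ℝ | Monotone (z ∘ σ) ∧ ∀ i, z i ∈ Set.Icc (0:ℝ) 1} =
      Matrix.toLin' (σ.permMatrix ℝ) ⁻¹' (OrdS n) := by
    ext z
    simp only [Set.mem_setOf_eq, Set.mem_preimage, OrdS, happ]
    constructor
    · rintro ⟨h1, h2⟩
      exact ⟨h1, fun i => h2 (σ i)⟩
    · rintro ⟨h1, h2⟩
      refine ⟨h1, fun i => ?_⟩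
      have := h2 (σ.symm i)
      simpa using this
  rw [hset, vol_preimage_matrix _ hdet]

lemma measurable_RS {n : ℕ} (σ : Equiv.Perm (Fin n)) : MeasurableSet (RS σ) := by
  have h1 : MeasurableSet {z : Fin n → ℝ | Monotone (z ∘ σ)} := by
    have : {z : Fin n → ℝ | Monotone (z ∘ σ)} =
        ⋂ (i : Fin n) (j : Fin n) (_ : i ≤ j), {z : Fin n → ℝ | z (σ i) ≤ z (σ j)} := by
      ext z
      simp only [Set.mem_setOf_eq, Set.mem_iInter]
      exact ⟨fun h i j hij => h hij, fun h i j hij => h i j hij⟩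
    rw [this]
    exact MeasurableSet.iInter fun i => MeasurableSet.iInter fun j =>
      MeasurableSet.iInter fun _ =>
        measurableSet_le (measurable_pi_apply _) (measurable_pi_apply _)
  have h2 : MeasurableSet {z : Fin n → ℝ | ∀ i, z i ∈ Set.Icc (0:ℝ) 1} := by
    rw [Set.setOf_forall]
    exact MeasurableSet.iInter fun i => (measurable_pi_apply i) measurableSet_Icc
  exact h1.inter h2

lemma cube_cover (n : ℕ) :
    {z : Fin n → ℝ | ∀ i, z i ∈ Set.Icc (0:ℝ) 1} = ⋃ σ ∈ (Finset.univ : Finset (Equiv.Perm (Fin n))), RS σ := by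
  ext z
  simp only [Set.mem_setOf_eq, Set.mem_iUnion]
  constructor
  · intro hz
    exact ⟨Tuple.sort z, Finset.mem_univ _, Tuple.monotone_sort z, hz⟩
  · rintro ⟨σ, -, -, h2⟩
    exact h2

lemma RS_disj {n : ℕ} (σ σ' : Equiv.Perm (Fin n)) (hne : σ ≠ σ') :
    ∃ i j : Fin n, i ≠ j ∧ RS σ ∩ RS σ' ⊆ {z | z i = z j} := by
  have hpair : ∃ i j, i ≠ j ∧ σ.symm i ≤ σ.symm j ∧ σ'.symm j ≤ σ'.symm i := by
    by_contra hcon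
    push_neg at hcon
    have hm : StrictMono (fun a => σ'.symm (σ a)) := by
      intro a b hab
      have hne2 : σ a ≠ σ b := fun hh => (ne_of_lt hab) (σ.injective hh)
      have h1 : σ.symm (σ a) ≤ σ.symm (σ b) := by simpa using hab.le
      exact hcon (σ a) (σ b) hne2 h1
    have hrange : Set.range (fun a => σ'.symm (σ a)) = Set.range (id : Fin n → Fin n) := by
      rw [Set.range_id]
      exact Set.range_eq_univ.mpr ((σ'.symm.surjective).comp σ.surjective)
    have hid : (fun a => σ'.symm (σ a)) = id := (hm.range_inj strictMono_id).mp hrange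
    apply hne
    ext a
    have := congrFun hid a
    simp only [id_eq] at this
    have h2 := congrArg σ' this
    simp only [Equiv.apply_symm_apply] at h2
    exact congrArg Fin.val h2
  obtain ⟨i, j, hij, h1, h2⟩ := hpair
  refine ⟨i, j, hij, ?_⟩
  rintro z ⟨⟨hz1, -⟩, ⟨hz2, -⟩⟩
  have a1 : z i ≤ z j := by
    have := hz1 h1
    simpa using this
  have a2 : z j ≤ z i := by
    have := hz2 h2
    simpa using this
  exact le_antisymm a1 a2

lemma null_pair_fin {n : ℕ} (i j : Fin n) (hij : i ≠ j) :
    volume {z : Fin n → ℝ | z i = z j} = 0 := by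
  have : {z : Fin n → ℝ | z i = z j} = {x : Fin n → ℝ | ppt x (some i) = ppt x (some j)} := rfl
  rw [this]
  exact null_pair _ _ (by simpa using hij)

lemma vol_OrdS (n : ℕ) : (n.factorial : ENNReal) * volume (OrdS n) = 1 := by
  classical
  have hcube : volume {z : Fin n → ℝ | ∀ i, z i ∈ Set.Icc (0:ℝ) 1} = 1 := by
    have : {z : Fin n → ℝ | ∀ i, z i ∈ Set.Icc (0:ℝ) 1} =
        Set.pi Set.univ (fun _ : Fin n => Set.Icc (0:ℝ) 1) := by
      ext z
      simp only [Set.mem_setOf_eq, Set.mem_pi, Set.mem_univ, forall_true_left]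
    rw [this, volume_pi_pi]
    simp
  have hsum : volume {z : Fin n → ℝ | ∀ i, z i ∈ Set.Icc (0:ℝ) 1} =
      ∑ σ : Equiv.Perm (Fin n), volume (RS σ) := by
    rw [cube_cover n]
    rw [measure_biUnion_finset₀]
    · intro σ _ σ' _ hne
      obtain ⟨i, j, hij, hsub⟩ := RS_disj σ σ' hne
      exact measure_mono_null hsub (null_pair_fin i j hij)
    · exact fun σ _ => (measurable_RS σ).nullMeasurableSet
  have hperm : ∀ σ : Equiv.Perm (Fin n), volume (RS σ) = volume (OrdS n) := fun σ => vol_perm σ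
  rw [hcube] at hsum
  rw [Finset.sum_congr rfl fun σ _ => hperm σ, Finset.sum_const, Finset.card_univ,
    Fintype.card_perm] at hsum
  rw [Fintype.card_fin, nsmul_eq_mul] at hsum
  exact hsum.symm

lemma OrdS_preimage (n : ℕ) (hn : 1 ≤ n) :
    ∃ D : Matrix (Fin n) (Fin n) ℝ, |D.det| = 1 ∧ OrdS n = Matrix.toLin' D ⁻¹' DeltaP n := by
  classical
  set D : Matrix (Fin n) (Fin n) ℝ := fun j k =>
    (if k = j then 1 else 0) + (if (k : ℕ) + 1 = (j : ℕ) then -1 else 0) with hD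
  have hDjk : ∀ j k, D j k = (if k = j then (1:ℝ) else 0) +
      (if (k : ℕ) + 1 = (j : ℕ) then -1 else 0) := fun j k => rfl
  -- application
  have happ : ∀ (z : Fin n → ℝ) (j : Fin n), Matrix.toLin' D z j =
      z j - (if h : 0 < (j : ℕ) then z ⟨(j : ℕ) - 1, by omega⟩ else 0) := by
    intro z j
    rw [Matrix.toLin'_apply]
    show ∑ k, D j k * z k = _
    have hrow : ∀ k, D j k * z k =
        (if k = j then z k else 0) + (if (k : ℕ) + 1 = (j : ℕ) then -(z k) else 0) := by
      intro k
      rw [hDjk, add_mul]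
      congr 1
      · split <;> simp
      · split <;> simp
    rw [Finset.sum_congr rfl fun k _ => hrow k, Finset.sum_add_distrib,
      Finset.sum_ite_eq' Finset.univ j z]
    by_cases h : 0 < (j : ℕ)
    · have hcond : ∀ k : Fin n, ((k : ℕ) + 1 = (j : ℕ)) ↔ (k = (⟨(j : ℕ) - 1, by omega⟩ : Fin n)) := by
        intro k
        constructor
        · intro hk; apply Fin.ext; simp; omega
        · intro hk; rw [hk]; simp; omega
      have : ∀ k : Fin n, (if (k : ℕ) + 1 = (j : ℕ) then -(z k) else 0) =
          (if k = (⟨(j : ℕ) - 1, by omega⟩ : Fin n) then -(z k) else 0) := by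
        intro k
        by_cases hk : (k : ℕ) + 1 = (j : ℕ)
        · rw [if_pos hk, if_pos ((hcond k).mp hk)]
        · rw [if_neg hk, if_neg (fun hh => hk ((hcond k).mpr hh))]
      rw [Finset.sum_congr rfl fun k _ => this k,
        Finset.sum_ite_eq' Finset.univ _ (fun k => -(z k))]
      simp only [Finset.mem_univ, if_pos]
      rw [dif_pos h]
      ring
    · have : ∀ k : Fin n, (if (k : ℕ) + 1 = (j : ℕ) then -(z k) else 0) = 0 := by
        intro k
        rw [if_neg]
        omega
      rw [Finset.sum_congr rfl fun k _ => this k, Finset.sum_const_zero]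
      rw [dif_neg h]
      simp
  -- determinant
  have hdet : D.det = 1 := by
    have htri : D.BlockTriangular OrderDual.toDual := by
      intro i j hij
      have hij' : (i : ℕ) < (j : ℕ) := hij
      rw [hDjk, if_neg (by intro hh; rw [hh] at hij'; omega), if_neg (by omega)]
      ring
    rw [Matrix.det_of_lowerTriangular D htri]
    have : ∀ i : Fin n, D i i = 1 := by
      intro i
      rw [hDjk, if_pos rfl, if_neg (by omega)]
      ring
    rw [Finset.prod_congr rfl fun i _ => this i, Finset.prod_const_one]
  refine ⟨D, by rw [hdet]; norm_num, ?_⟩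
  -- set equality
  ext z
  simp only [OrdS, Set.mem_setOf_eq, Set.mem_preimage, DeltaP, happ]
  -- telescoping function
  set g : ℕ → ℝ := fun k => if h : k = 0 then 0 else z ⟨min (k - 1) (n - 1), by omega⟩ with hg
  have hgsucc : ∀ i : Fin n, g ((i : ℕ) + 1) = z i := by
    intro i
    rw [hg]; dsimp only
    rw [dif_neg (by omega)]
    congr 1
    apply Fin.ext
    simp
    omega
  have hterm : ∀ j : Fin n, (z j - if h : 0 < (j : ℕ) then z ⟨(j : ℕ) - 1, by omega⟩ else 0)
      = g ((j : ℕ) + 1) - g (j : ℕ) := by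
    intro j
    rw [hgsucc j]
    by_cases h : 0 < (j : ℕ)
    · rw [dif_pos h, hg]; dsimp only
      rw [dif_neg (by omega)]
      congr 2
      apply Fin.ext
      simp
      omega
    · rw [dif_neg h, hg]; dsimp only
      rw [dif_pos (by omega)]
  have hsum : (∑ j : Fin n, (z j - if h : 0 < (j : ℕ) then z ⟨(j : ℕ) - 1, by omega⟩ else 0))
      = z ⟨n - 1, by omega⟩ := by
    rw [Finset.sum_congr rfl fun j _ => hterm j]
    rw [Fin.sum_univ_eq_sum_range (fun i => g (i + 1) - g i) n]
    rw [Finset.sum_range_sub g]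
    rw [hg]; dsimp only
    rw [dif_pos rfl, dif_neg (by omega), sub_zero]
    congr 1
    apply Fin.ext
    simp
  constructor
  · rintro ⟨hmono, hbd⟩
    constructor
    · intro j
      by_cases h : 0 < (j : ℕ)
      · rw [dif_pos h, sub_nonneg]
        exact hmono (by rw [Fin.le_def]; simp only [Fin.val_mk]; omega)
      · rw [dif_neg h, sub_zero]
        exact (hbd j).1
    · rw [hsum]
      exact (hbd _).2
  · rintro ⟨hpos, hs⟩
    rw [hsum] at hs
    have hgmono : Monotone g := by
      apply monotone_nat_of_le_succ
      intro k
      rcases Nat.eq_zero_or_pos k with hk | hk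
      · subst hk
        rw [hg]; dsimp only
        rw [dif_pos rfl, dif_neg (by omega)]
        have := hpos ⟨0, by omega⟩
        rw [dif_neg (by simp)] at this
        simpa using this
      · by_cases hkn : k ≤ n - 1
        · have hkf : k < n := by omega
          have := hpos ⟨k, hkf⟩
          rw [dif_pos (by simpa using hk)] at this
          rw [sub_nonneg] at this
          calc g k = z ⟨k - 1, by omega⟩ := by
                rw [hg]; dsimp only; rw [dif_neg (by omega)]
                congr 1; apply Fin.ext; simp; omega
            _ ≤ z ⟨k, hkf⟩ := this
            _ = g (k + 1) := (hgsucc ⟨k, hkf⟩).symm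
        · have : g k = g (k + 1) := by
            rw [hg]; dsimp only
            rw [dif_neg (by omega), dif_neg (by omega)]
            congr 1; apply Fin.ext; simp; omega
          rw [this]
    have hz0 : (0:ℝ) ≤ g 1 := by
      have := hpos ⟨0, by omega⟩
      rw [dif_neg (by simp), sub_zero] at this
      rw [hgsucc ⟨0, by omega⟩]  -- g 1 = z 0... careful (0:ℕ)+1 = 1
      exact this
    have hztop : ∀ i : Fin n, z i ≤ 1 := by
      intro i
      rw [← hgsucc i]
      calc g ((i:ℕ) + 1) ≤ g n := hgmono (by omega)
        _ = z ⟨n - 1, by omega⟩ := by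
            rw [hg]; dsimp only; rw [dif_neg (by omega)]
            congr 1; apply Fin.ext; simp
        _ ≤ 1 := hs
    have hzbot : ∀ i : Fin n, (0:ℝ) ≤ z i := by
      intro i
      rw [← hgsucc i]
      exact le_trans hz0 (hgmono (by omega))
    refine ⟨?_, fun i => ⟨hzbot i, hztop i⟩⟩
    intro a b hab
    rw [← hgsucc a, ← hgsucc b]
    exact hgmono (by omega)

lemma vol_DeltaP (n : ℕ) (hn : 1 ≤ n) : volume (DeltaP n) = ((n.factorial : ENNReal))⁻¹ := by
  obtain ⟨D, hdet, hset⟩ := OrdS_preimage n hn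
  have h1 : volume (OrdS n) = volume (DeltaP n) := by
    rw [hset, vol_preimage_matrix D hdet]
  have h2 := vol_OrdS n
  rw [h1] at h2
  have hfac : (n.factorial : ENNReal) ≠ 0 := by
    simp [Nat.factorial_ne_zero]
  have hfac2 : (n.factorial : ENNReal) ≠ ⊤ := by simp
  calc volume (DeltaP n) = (n.factorial : ENNReal)⁻¹ * ((n.factorial : ENNReal) * volume (DeltaP n)) := by
        rw [← mul_assoc, ENNReal.inv_mul_cancel hfac hfac2, one_mul]
    _ = (n.factorial : ENNReal)⁻¹ := by rw [h2, mul_one]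


lemma TP_eq_preimage {n : ℕ} (m : pidx n) (B : Finset (pidx n)) (hmB : m ∉ B) :
    ∃ M : Matrix (Fin n) (Fin n) ℝ, |M.det| = 1 ∧ TP m B = Matrix.toLin' M ⁻¹' DeltaP n := by
  cases m with
  | none => exact TP_none B hmB
  | some m₀ => exact TP_some m₀ B hmB

lemma vol_TP {n : ℕ} (hn : 1 ≤ n) (q : pidx n × Finset (pidx n)) (hq : q ∈ SP n) :
    volume (TP q.1 q.2) = ((n.factorial : ENNReal))⁻¹ := by
  have hmB : q.1 ∉ q.2 := by
    simp only [SP, mem_filter] at hq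
    exact hq.2.1
  obtain ⟨M, hdet, hset⟩ := TP_eq_preimage q.1 q.2 hmB
  rw [hset, vol_preimage_matrix M hdet, vol_DeltaP n hn]

lemma measurable_TP {n : ℕ} (q : pidx n × Finset (pidx n)) (hq : q ∈ SP n) :
    MeasurableSet (TP q.1 q.2) := by
  have hmB : q.1 ∉ q.2 := by
    simp only [SP, mem_filter] at hq
    exact hq.2.1
  obtain ⟨M, hdet, hset⟩ := TP_eq_preimage q.1 q.2 hmB
  rw [hset]
  have hcont : Continuous (Matrix.toLin' M) := LinearMap.continuous_of_finiteDimensional _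
  exact (measurable_DeltaP n).preimage hcont.measurable

end AuxPN

/-- For every `n ≥ 1`, the normalized volume of `P_N` is `(n+1) · C(n, ⌊n/2⌋)`. -/
theorem nvol_PN (n : ℕ) (hn : 1 ≤ n) :
    (n.factorial : ENNReal) * volume (PN n) = ((n + 1) * Nat.choose n (n / 2) : ℕ) := by
  classical
  rw [PN_eq n hn, cover n]
  rw [measure_biUnion_finset₀]
  · rw [Finset.sum_congr rfl (fun q hq => vol_TP hn q hq), Finset.sum_const, card_SP n,
      nsmul_eq_mul]
    rw [← mul_assoc, mul_comm ((n.factorial : ENNReal)) _, mul_assoc,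
      ENNReal.mul_inv_cancel (by simp [Nat.factorial_ne_zero]) (by simp), mul_one]
  · intro q hq q' hq' hne
    obtain ⟨i, j, hij, hsub⟩ := TP_disj q q' hq hq' hne
    exact measure_mono_null hsub (null_pair i j hij)
  · exact fun q hq => (measurable_TP q hq).nullMeasurableSet
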